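/- Let (R₁,C₁),…,(Rₙ,Cₙ) be i.i.d. pairs where Rᵢ takes values in {1,…,L_r} with P(Rᵢ = a) = p_a, Cᵢ takes values in {1,…,L_j} with P(Cᵢ = b) = q_b, and Rᵢ is independent of Cᵢ. Let p̂_a = (1/n)∑ᵢ 1{Rᵢ = a} and q̂_b = (1/n)∑ᵢ 1{Cᵢ = b}. Then ∑_{a=1}^{L_r} ∑_{b=1}^{L_j} E[ ( ∑_{i=1}^n 2(1{Cᵢ = b} - q̂_b)(p̂_a - 1{Rᵢ = a}) )² ] = 4(n-1)·( ∑_{a} p_a(1-p_a) )·( ∑_{b} q_b(1-q_b) ). -/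

import Mathlib

open MeasureTheory ProbabilityTheory


lemma delta_sum {n : ℕ} (i : Fin n) (c : ℝ) :
    ∑ j : Fin n, (if i = j then c else 0) = c := by simp

lemma delta_sum' {n : ℕ} (i : Fin n) (f : Fin n → ℝ) :
    ∑ j : Fin n, (if i = j then f j else 0) = f i := by simp

lemma bracket_sum {n : ℕ} (i : Fin n) :
    ∑ j : Fin n, (1 - (n:ℝ) * (if i = j then 1 else 0)) = 0 := by
  rw [Finset.sum_sub_distrib, ← Finset.mul_sum, delta_sum i 1]
  simp

lemma bracket_sq_sum {n : ℕ} (i k : Fin n) :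
    ∑ j : Fin n, (1 - (n:ℝ) * (if i = j then 1 else 0)) * (1 - (n:ℝ) * (if k = j then 1 else 0))
      = (n:ℝ)^2 * (if i = k then 1 else 0) - n := by
  have expand : ∀ j : Fin n,
      (1 - (n:ℝ) * (if i = j then 1 else 0)) * (1 - (n:ℝ) * (if k = j then 1 else 0))
      = 1 - (n:ℝ) * (if i = j then 1 else 0) - (n:ℝ) * (if k = j then 1 else 0)
        + (n:ℝ)^2 * (if i = j then (if k = j then (1:ℝ) else 0) else 0) := by
    intro j
    by_cases h1 : i = j <;> by_cases h2 : k = j <;> simp [h1, h2] <;> ring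
  rw [Finset.sum_congr rfl (fun j _ => expand j)]
  rw [Finset.sum_add_distrib, Finset.sum_sub_distrib, Finset.sum_sub_distrib,
    ← Finset.mul_sum, ← Finset.mul_sum, ← Finset.mul_sum,
    delta_sum i 1, delta_sum k 1, delta_sum' i (fun j => if k = j then (1:ℝ) else 0)]
  have : (if k = i then (1:ℝ) else 0) = (if i = k then 1 else 0) := by
    by_cases h : i = k <;> simp [h, eq_comm]
  rw [this]
  simp
  ring

lemma quad_sum (n : ℕ) (p q : ℝ) :
    ∑ i : Fin n, ∑ j : Fin n, ∑ k : Fin n, ∑ l : Fin n,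
      (1 - (n:ℝ) * (if i = j then 1 else 0)) * (1 - (n:ℝ) * (if k = l then 1 else 0)) *
      ((if i = k then p else p*p) * (if j = l then q else q*q))
    = (n:ℝ)^2 * ((n:ℝ)-1) * ((p - p*p) * (q - q*q)) := by
  -- inner two sums for fixed i, k
  have inner : ∀ i k : Fin n,
      ∑ j : Fin n, ∑ l : Fin n,
        (1 - (n:ℝ) * (if i = j then 1 else 0)) * (1 - (n:ℝ) * (if k = l then 1 else 0)) *
        (if j = l then q else q*q)
      = (q - q*q) * ((n:ℝ)^2 * (if i = k then 1 else 0) - n) := by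
    intro i k
    have hl : ∀ j : Fin n,
        ∑ l : Fin n, (1 - (n:ℝ) * (if i = j then 1 else 0)) * (1 - (n:ℝ) * (if k = l then 1 else 0)) *
          (if j = l then q else q*q)
        = (1 - (n:ℝ) * (if i = j then 1 else 0)) *
            ((q*q) * (∑ l : Fin n, (1 - (n:ℝ) * (if k = l then 1 else 0)))
             + (q - q*q) * (1 - (n:ℝ) * (if k = j then 1 else 0))) := by
      intro j
      have e : ∀ l : Fin n,
          (1 - (n:ℝ) * (if i = j then 1 else 0)) * (1 - (n:ℝ) * (if k = l then 1 else 0)) *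
          (if j = l then q else q*q)
          = (1 - (n:ℝ) * (if i = j then 1 else 0)) * ((1 - (n:ℝ) * (if k = l then 1 else 0)) * (q*q))
            + (if j = l then (1 - (n:ℝ) * (if i = j then 1 else 0)) *
                ((q - q*q) * (1 - (n:ℝ) * (if k = l then 1 else 0))) else 0) := by
        intro l
        by_cases h : j = l <;> simp [h] <;> ring
      rw [Finset.sum_congr rfl (fun l _ => e l), Finset.sum_add_distrib,
        delta_sum' j (fun l => (1 - (n:ℝ) * (if i = j then 1 else 0)) *
          ((q - q*q) * (1 - (n:ℝ) * (if k = l then 1 else 0)))),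
        ← Finset.mul_sum, ← Finset.sum_mul]
      ring
    rw [Finset.sum_congr rfl (fun j _ => hl j)]
    rw [bracket_sum k]
    have simp2 : ∀ j : Fin n,
        (1 - (n:ℝ) * (if i = j then 1 else 0)) *
          ((q*q) * 0 + (q - q*q) * (1 - (n:ℝ) * (if k = j then 1 else 0)))
        = (q - q*q) * ((1 - (n:ℝ) * (if i = j then 1 else 0)) * (1 - (n:ℝ) * (if k = j then 1 else 0))) := by
      intro j; ring
    rw [Finset.sum_congr rfl (fun j _ => simp2 j), ← Finset.mul_sum, bracket_sq_sum i k]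
  -- now reorder: goal sum over i,j,k,l; swap j,k sums
  have reorder : ∀ i : Fin n,
      ∑ j : Fin n, ∑ k : Fin n, ∑ l : Fin n,
        (1 - (n:ℝ) * (if i = j then 1 else 0)) * (1 - (n:ℝ) * (if k = l then 1 else 0)) *
        ((if i = k then p else p*p) * (if j = l then q else q*q))
      = ∑ k : Fin n, (if i = k then p else p*p) *
          ((q - q*q) * ((n:ℝ)^2 * (if i = k then 1 else 0) - n)) := by
    intro i
    rw [Finset.sum_comm]
    refine Finset.sum_congr rfl (fun k _ => ?_)
    rw [← inner i k, Finset.mul_sum]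
    refine Finset.sum_congr rfl (fun j _ => ?_)
    rw [Finset.mul_sum]
    refine Finset.sum_congr rfl (fun l _ => ?_)
    ring
  rw [Finset.sum_congr rfl (fun i _ => reorder i)]
  have final : ∀ i : Fin n,
      ∑ k : Fin n, (if i = k then p else p*p) *
        ((q - q*q) * ((n:ℝ)^2 * (if i = k then 1 else 0) - n))
      = (q - q*q) * (p - p*p) * ((n:ℝ)^2 - n) := by
    intro i
    have e : ∀ k : Fin n, (if i = k then p else p*p) *
        ((q - q*q) * ((n:ℝ)^2 * (if i = k then 1 else 0) - n))
        = (p*p) * ((q - q*q) * ((n:ℝ)^2 * (if i = k then 1 else 0) - n))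
          + (if i = k then (p - p*p) * ((q - q*q) * ((n:ℝ)^2 - n)) else 0) := by
      intro k; by_cases h : i = k <;> simp [h] <;> ring
    rw [Finset.sum_congr rfl (fun k _ => e k), Finset.sum_add_distrib,
      delta_sum i ((p - p*p) * ((q - q*q) * ((n:ℝ)^2 - n)))]
    have e2 : ∑ k : Fin n, (p*p) * ((q - q*q) * ((n:ℝ)^2 * (if i = k then 1 else 0) - n))
        = (p*p) * ((q - q*q) * ((n:ℝ)^2 * 1 - n * n)) := by
      rw [← Finset.mul_sum]
      congr 1
      rw [← Finset.mul_sum]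
      congr 1
      rw [Finset.sum_sub_distrib, ← Finset.mul_sum, delta_sum i 1]
      simp [mul_comm]
    rw [e2]
    ring
  rw [Finset.sum_congr rfl (fun i _ => final i), Finset.sum_const, Finset.card_univ,
    Fintype.card_fin, nsmul_eq_mul]
  ring


lemma integral_finset_prod_of_iIndep {Ω : Type*} [MeasurableSpace Ω] {μ : Measure Ω}
    [IsProbabilityMeasure μ] {n : ℕ} {F : Fin n → Ω → ℝ}
    (hind : iIndepFun F μ)
    (hmeas : ∀ i, Measurable (F i)) (s : Finset (Fin n)) :
    ∫ ω, ∏ i ∈ s, F i ω ∂μ = ∏ i ∈ s, ∫ ω, F i ω ∂μ := by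
  classical
  induction s using Finset.induction with
  | empty => simp
  | @insert i s hi ih =>
    have hprodmeas : Measurable (∏ j ∈ s, F j) := by
      have : (∏ j ∈ s, F j) = fun ω => ∏ j ∈ s, F j ω := by
        funext ω; simp [Finset.prod_apply]
      rw [this]
      exact Finset.measurable_prod s (fun j _ => hmeas j)
    have h1 : IndepFun (F i) (∏ j ∈ s, F j) μ :=
      (hind.indepFun_finsetProd_of_notMem hmeas hi).symm
    have h2 := h1.integral_mul_eq_mul_integral (hmeas i).aestronglyMeasurable hprodmeas.aestronglyMeasurable
    have h3 : ∫ ω, F i ω * ∏ j ∈ s, F j ω ∂μ = ∫ ω, (F i * ∏ j ∈ s, F j) ω ∂μ := by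
      apply integral_congr_ae; filter_upwards with ω; simp [Finset.prod_apply]
    have h4 : ∫ ω, (∏ j ∈ s, F j) ω ∂μ = ∫ ω, ∏ j ∈ s, F j ω ∂μ := by
      apply integral_congr_ae; filter_upwards with ω; simp [Finset.prod_apply]
    have hstep : ∫ ω, ∏ j ∈ insert i s, F j ω ∂μ = ∫ ω, F i ω * ∏ j ∈ s, F j ω ∂μ := by
      apply integral_congr_ae; filter_upwards with ω; rw [Finset.prod_insert hi]
    rw [hstep, Finset.prod_insert hi, ← ih, h3, h2, h4]

lemma moment_four {Ω : Type*} [MeasurableSpace Ω] (μ : Measure Ω)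
    [IsProbabilityMeasure μ] {n Lr Lj : ℕ}
    (R : Fin n → Ω → Fin Lr) (C : Fin n → Ω → Fin Lj) (pa : Fin Lr → ℝ) (qb : Fin Lj → ℝ)
    (hmR : ∀ i, Measurable (R i)) (hmC : ∀ i, Measurable (C i))
    (hpa : ∀ i a, (μ {ω | R i ω = a}).toReal = pa a)
    (hqb : ∀ i b, (μ {ω | C i ω = b}).toReal = qb b)
    (hiid : iIndepFun (fun i ω => (R i ω, C i ω)) μ)
    (hRC : ∀ i, IndepFun (R i) (C i) μ) (a : Fin Lr) (b : Fin Lj) (i j k l : Fin n) :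
    ∫ ω, (if R i ω = a then (1:ℝ) else 0) * (if C j ω = b then (1:ℝ) else 0)
        * (if R k ω = a then (1:ℝ) else 0) * (if C l ω = b then (1:ℝ) else 0) ∂μ
    = (if i = k then pa a else pa a * pa a) * (if j = l then qb b else qb b * qb b) := by
  classical
  set X : Fin n → Ω → ℝ := fun s ω => if R s ω = a then 1 else 0 with hX
  set Y : Fin n → Ω → ℝ := fun s ω => if C s ω = b then 1 else 0 with hY
  set F : Fin n → Ω → ℝ := fun s ω =>
    (if s = i ∨ s = k then X s ω else 1) * (if s = j ∨ s = l then Y s ω else 1) with hF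
  have hXmeas : ∀ s, Measurable (X s) :=
    fun s => Measurable.ite (hmR s (measurableSet_singleton a)) measurable_const measurable_const
  have hYmeas : ∀ s, Measurable (Y s) :=
    fun s => Measurable.ite (hmC s (measurableSet_singleton b)) measurable_const measurable_const
  have hFmeas : ∀ s, Measurable (F s) := by
    intro s
    apply Measurable.mul
    · split_ifs with h
      · exact hXmeas s
      · exact measurable_const
    · split_ifs with h
      · exact hYmeas s
      · exact measurable_const
  -- X integrals
  have hXint : ∀ s, ∫ ω, X s ω ∂μ = pa a := by
    intro s
    have : X s = Set.indicator {ω | R s ω = a} (fun _ => (1:ℝ)) := by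
      funext ω; simp [hX, Set.indicator_apply, Set.mem_setOf_eq]
    have hms : MeasurableSet {ω | R s ω = a} := hmR s (measurableSet_singleton a)
    rw [this, integral_indicator_const (1:ℝ) hms, measureReal_def, hpa s a]
    simp
  have hYint : ∀ s, ∫ ω, Y s ω ∂μ = qb b := by
    intro s
    have : Y s = Set.indicator {ω | C s ω = b} (fun _ => (1:ℝ)) := by
      funext ω; simp [hY, Set.indicator_apply, Set.mem_setOf_eq]
    have hms : MeasurableSet {ω | C s ω = b} := hmC s (measurableSet_singleton b)
    rw [this, integral_indicator_const (1:ℝ) hms, measureReal_def, hqb s b]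
    simp
  have hXYint : ∀ s, ∫ ω, X s ω * Y s ω ∂μ = pa a * qb b := by
    intro s
    have hma : Measurable (fun r : Fin Lr => if r = a then (1:ℝ) else 0) :=
      Measurable.ite (measurableSet_singleton a) measurable_const measurable_const
    have hmb : Measurable (fun c : Fin Lj => if c = b then (1:ℝ) else 0) :=
      Measurable.ite (measurableSet_singleton b) measurable_const measurable_const
    have hind : IndepFun (X s) (Y s) μ := (hRC s).comp hma hmb
    have := hind.integral_mul_eq_mul_integral (hXmeas s).aestronglyMeasurable (hYmeas s).aestronglyMeasurable
    rw [← hXint s, ← hYint s, ← this]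
    rfl
  -- integral of F s
  have hFint : ∀ s, ∫ ω, F s ω ∂μ =
      (if s = i ∨ s = k then pa a else 1) * (if s = j ∨ s = l then qb b else 1) := by
    intro s
    simp only [hF]
    by_cases h1 : s = i ∨ s = k <;> by_cases h2 : s = j ∨ s = l <;>
      simp only [h1, h2, if_true, if_false, ite_true, ite_false, mul_one, one_mul]
    · exact hXYint s
    · exact hXint s
    · exact hYint s
    · simp
  -- independence of F
  have hFind : iIndepFun F μ := by
    have := hiid.comp (fun s (x : Fin Lr × Fin Lj) =>
        (if s = i ∨ s = k then (if x.1 = a then (1:ℝ) else 0) else 1)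
        * (if s = j ∨ s = l then (if x.2 = b then (1:ℝ) else 0) else 1))
      (fun s => by
        apply Measurable.mul <;> split_ifs
        · exact Measurable.ite (measurable_fst (measurableSet_singleton a))
            measurable_const measurable_const
        · exact measurable_const
        · exact Measurable.ite (measurable_snd (measurableSet_singleton b))
            measurable_const measurable_const
        · exact measurable_const)
    exact this
  -- pointwise identity
  have hpt : ∀ ω, X i ω * Y j ω * X k ω * Y l ω = ∏ s, F s ω := by
    intro ω
    have hXsq : ∀ s, X s ω * X s ω = X s ω := by
      intro s; simp only [hX]; split_ifs <;> ring
    have hYsq : ∀ s, Y s ω * Y s ω = Y s ω := by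
      intro s; simp only [hY]; split_ifs <;> ring
    rw [hF]
    simp only []
    rw [Finset.prod_mul_distrib]
    have e1 : (∏ s, if s = i ∨ s = k then X s ω else 1) = X i ω * X k ω := by
      have : ∀ s : Fin n, (if s = i ∨ s = k then X s ω else 1)
          = (if s ∈ ({i, k} : Finset (Fin n)) then X s ω else 1) := by
        intro s; simp [Finset.mem_insert, Finset.mem_singleton]
      rw [Finset.prod_congr rfl (fun s _ => this s), Finset.prod_ite_mem,
        Finset.univ_inter]
      by_cases hik : i = k
      · subst hik; simp [hXsq i]
      · rw [Finset.prod_pair hik]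
    have e2 : (∏ s, if s = j ∨ s = l then Y s ω else 1) = Y j ω * Y l ω := by
      have : ∀ s : Fin n, (if s = j ∨ s = l then Y s ω else 1)
          = (if s ∈ ({j, l} : Finset (Fin n)) then Y s ω else 1) := by
        intro s; simp [Finset.mem_insert, Finset.mem_singleton]
      rw [Finset.prod_congr rfl (fun s _ => this s), Finset.prod_ite_mem,
        Finset.univ_inter]
      by_cases hjl : j = l
      · subst hjl; simp [hYsq j]
      · rw [Finset.prod_pair hjl]
    rw [e1, e2]; ring
  calc ∫ ω, X i ω * Y j ω * X k ω * Y l ω ∂μ = ∫ ω, ∏ s, F s ω ∂μ := by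
        simp only [hpt]
    _ = ∏ s, ∫ ω, F s ω ∂μ := integral_finset_prod_of_iIndep hFind hFmeas _
    _ = ∏ s : Fin n, ((if s = i ∨ s = k then pa a else 1) * (if s = j ∨ s = l then qb b else 1)) := by
        exact Finset.prod_congr rfl (fun s _ => hFint s)
    _ = (∏ s : Fin n, if s = i ∨ s = k then pa a else 1)
        * (∏ s : Fin n, if s = j ∨ s = l then qb b else 1) := Finset.prod_mul_distrib
    _ = (if i = k then pa a else pa a * pa a) * (if j = l then qb b else qb b * qb b) := by
        congr 1
        · have : ∀ s : Fin n, (if s = i ∨ s = k then pa a else 1)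
              = (if s ∈ ({i, k} : Finset (Fin n)) then pa a else 1) := by
            intro s; simp [Finset.mem_insert, Finset.mem_singleton]
          rw [Finset.prod_congr rfl (fun s _ => this s), Finset.prod_ite_mem,
            Finset.univ_inter, Finset.prod_const]
          by_cases hik : i = k
          · subst hik; simp
          · rw [Finset.card_pair hik]; simp [hik, sq]
        · have : ∀ s : Fin n, (if s = j ∨ s = l then qb b else 1)
              = (if s ∈ ({j, l} : Finset (Fin n)) then qb b else 1) := by
            intro s; simp [Finset.mem_insert, Finset.mem_singleton]
          rw [Finset.prod_congr rfl (fun s _ => this s), Finset.prod_ite_mem,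
            Finset.univ_inter, Finset.prod_const]
          by_cases hjl : j = l
          · subst hjl; simp
          · rw [Finset.card_pair hjl]; simp [hjl, sq]


lemma integral_quad_sum' {Ω : Type*} [MeasurableSpace Ω] (μ : Measure Ω) {n : ℕ}
    (G : Fin n → Fin n → Fin n → Fin n → Ω → ℝ)
    (hG : ∀ i k j l, Integrable (G i k j l) μ) :
    ∫ ω, ∑ i, ∑ k, ∑ j, ∑ l, G i k j l ω ∂μ = ∑ i, ∑ k, ∑ j, ∑ l, ∫ ω, G i k j l ω ∂μ := by
  rw [integral_finset_sum _ (fun i _ => integrable_finset_sum _ (fun k _ =>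
    integrable_finset_sum _ (fun j _ => integrable_finset_sum _ (fun l _ => hG i k j l))))]
  refine Finset.sum_congr rfl fun i _ => ?_
  rw [integral_finset_sum _ (fun k _ => integrable_finset_sum _ (fun j _ =>
    integrable_finset_sum _ (fun l _ => hG i k j l)))]
  refine Finset.sum_congr rfl fun k _ => ?_
  rw [integral_finset_sum _ (fun j _ => integrable_finset_sum _ (fun l _ => hG i k j l))]
  refine Finset.sum_congr rfl fun j _ => ?_
  rw [integral_finset_sum _ (fun l _ => hG i k j l)]

lemma integral_ab {Ω : Type*} [MeasurableSpace Ω] (μ : Measure Ω) [IsProbabilityMeasure μ]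
    {n : ℕ} (hn : 0 < n) (X Y : Fin n → Ω → ℝ) (p q : ℝ)
    (hM : ∀ i j k l : Fin n, ∫ ω, X i ω * Y j ω * X k ω * Y l ω ∂μ
      = (if i = k then p else p*p) * (if j = l then q else q*q))
    (hint : ∀ i j k l : Fin n, Integrable (fun ω => X i ω * Y j ω * X k ω * Y l ω) μ) :
    ∫ ω, (∑ i, 2 * (Y i ω - (∑ j, Y j ω) / n) * ((∑ j, X j ω) / n - X i ω)) ^ 2 ∂μ
      = 4 * ((n:ℝ) - 1) * ((p - p*p) * (q - q*q)) := by
  classical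
  have hn' : (n:ℝ) ≠ 0 := Nat.cast_ne_zero.mpr hn.ne'
  set c : Fin n → Fin n → ℝ := fun i j => 1 - (n:ℝ) * (if i = j then 1 else 0) with hc
  -- pointwise identity
  have key : ∀ ω, (∑ i, 2 * (Y i ω - (∑ j, Y j ω) / n) * ((∑ j, X j ω) / n - X i ω))
      = (2/(n:ℝ)) * (∑ i, ∑ j, c i j * (X i ω * Y j ω)) := by
    intro ω
    have hrhsin : ∀ i, ∑ j, c i j * (X i ω * Y j ω)
        = X i ω * (∑ j, Y j ω) - (n:ℝ) * (X i ω * Y i ω) := by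
      intro i
      have e : ∀ j, c i j * (X i ω * Y j ω)
          = X i ω * Y j ω - (n:ℝ) * (if i = j then X i ω * Y j ω else 0) := by
        intro j; simp only [hc]; by_cases h : i = j <;> simp [h] <;> ring
      rw [Finset.sum_congr rfl (fun j _ => e j), Finset.sum_sub_distrib, ← Finset.mul_sum,
        ← Finset.mul_sum]
      congr 1
      congr 1
      simp
    rw [Finset.sum_congr rfl (fun i _ => hrhsin i), Finset.sum_sub_distrib,
      ← Finset.sum_mul, ← Finset.mul_sum]
    have e2 : ∀ i, 2 * (Y i ω - (∑ j, Y j ω) / n) * ((∑ j, X j ω) / n - X i ω)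
        = (2/(n:ℝ)) * (∑ j, X j ω) * Y i ω - 2 * (X i ω * Y i ω)
          - (2/((n:ℝ)*(n:ℝ))) * ((∑ j, Y j ω) * (∑ j, X j ω)) + (2/(n:ℝ)) * (∑ j, Y j ω) * X i ω := by
      intro i; field_simp; ring
    rw [Finset.sum_congr rfl (fun i _ => e2 i)]
    simp only [Finset.sum_add_distrib, Finset.sum_sub_distrib, ← Finset.mul_sum,
      Finset.sum_const, Finset.card_univ, Fintype.card_fin, nsmul_eq_mul]
    field_simp
    ring
  -- replace integrand
  have step1 : ∫ ω, (∑ i, 2 * (Y i ω - (∑ j, Y j ω) / n) * ((∑ j, X j ω) / n - X i ω)) ^ 2 ∂μ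
      = ∫ ω, (2/(n:ℝ))^2 * ∑ i, ∑ k, ∑ j, ∑ l,
          (c i j * (X i ω * Y j ω)) * (c k l * (X k ω * Y l ω)) ∂μ := by
    refine integral_congr_ae (Filter.Eventually.of_forall fun ω => ?_)
    dsimp only
    rw [key ω, mul_pow]
    congr 1
    rw [pow_two, Finset.sum_mul_sum]
    refine Finset.sum_congr rfl fun i _ => ?_
    refine Finset.sum_congr rfl fun k _ => ?_
    rw [Finset.sum_mul_sum]
  have hG : ∀ i k j l : Fin n,
      Integrable (fun ω => (c i j * (X i ω * Y j ω)) * (c k l * (X k ω * Y l ω))) μ := by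
    intro i k j l
    refine ((hint i j k l).const_mul (c i j * c k l)).congr
      (Filter.Eventually.of_forall fun ω => ?_)
    ring
  rw [step1, integral_const_mul, integral_quad_sum' μ _ hG]
  have hval : ∀ i k j l : Fin n,
      ∫ ω, (c i j * (X i ω * Y j ω)) * (c k l * (X k ω * Y l ω)) ∂μ
      = (c i j * c k l) * ((if i = k then p else p*p) * (if j = l then q else q*q)) := by
    intro i k j l
    have : ∫ ω, (c i j * (X i ω * Y j ω)) * (c k l * (X k ω * Y l ω)) ∂μ
        = ∫ ω, (c i j * c k l) * (X i ω * Y j ω * X k ω * Y l ω) ∂μ := by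
      refine integral_congr_ae (Filter.Eventually.of_forall fun ω => ?_)
      ring
    rw [this, integral_const_mul, hM i j k l]
  rw [Finset.sum_congr rfl (fun i _ => Finset.sum_congr rfl (fun k _ =>
    Finset.sum_congr rfl (fun j _ => Finset.sum_congr rfl (fun l _ => hval i k j l))))]
  -- reorder k and j sums, then use quad_sum
  have reord : ∑ i : Fin n, ∑ k : Fin n, ∑ j : Fin n, ∑ l : Fin n,
      (c i j * c k l) * ((if i = k then p else p*p) * (if j = l then q else q*q))
      = ∑ i : Fin n, ∑ j : Fin n, ∑ k : Fin n, ∑ l : Fin n,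
      c i j * c k l * ((if i = k then p else p*p) * (if j = l then q else q*q)) := by
    refine Finset.sum_congr rfl fun i _ => ?_
    exact Finset.sum_comm
  rw [reord]
  have hq := quad_sum n p q
  simp only [hc]
  rw [hq]
  field_simp
  ring

/-- Calibration weight identity for a discrete–discrete edge: for i.i.d. pairs (Rᵢ, Cᵢ) with
Rᵢ ⊥ Cᵢ, ∑ₐ∑_b E[(∑ᵢ 2(1{Cᵢ=b} - q̂_b)(p̂ₐ - 1{Rᵢ=a}))²]
  = 4(n-1)·(∑ₐ pₐ(1-pₐ))·(∑_b q_b(1-q_b)). -/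
theorem calibration_weight_discrete_discrete {Ω : Type*} [MeasurableSpace Ω] (μ : Measure Ω)
    [IsProbabilityMeasure μ] (n : ℕ) (hn : 0 < n) (Lr Lj : ℕ)
    (R : Fin n → Ω → Fin Lr) (C : Fin n → Ω → Fin Lj) (pa : Fin Lr → ℝ) (qb : Fin Lj → ℝ)
    (hmR : ∀ i, Measurable (R i)) (hmC : ∀ i, Measurable (C i))
    (hpa : ∀ i a, (μ {ω | R i ω = a}).toReal = pa a)
    (hqb : ∀ i b, (μ {ω | C i ω = b}).toReal = qb b)
    (hiid : iIndepFun (fun i ω => (R i ω, C i ω)) μ)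
    (hident : ∀ i, IdentDistrib (fun ω => (R i ω, C i ω)) (fun ω => (R ⟨0, hn⟩ ω, C ⟨0, hn⟩ ω)) μ μ)
    (hRC : ∀ i, IndepFun (R i) (C i) μ) :
    ∑ a : Fin Lr, ∑ b : Fin Lj, ∫ ω,
        (∑ i, 2 * ((if C i ω = b then (1 : ℝ) else 0)
              - (∑ j, if C j ω = b then (1 : ℝ) else 0) / n)
            * ((∑ j, if R j ω = a then (1 : ℝ) else 0) / n
              - (if R i ω = a then (1 : ℝ) else 0))) ^ 2 ∂μ
      = 4 * (n - 1 : ℝ) * (∑ a : Fin Lr, pa a * (1 - pa a)) * (∑ b : Fin Lj, qb b * (1 - qb b)) := by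
  classical
  have hint : ∀ (a : Fin Lr) (b : Fin Lj) (i j k l : Fin n),
      Integrable (fun ω => (if R i ω = a then (1:ℝ) else 0) * (if C j ω = b then (1:ℝ) else 0)
        * (if R k ω = a then (1:ℝ) else 0) * (if C l ω = b then (1:ℝ) else 0)) μ := by
    intro a b i j k l
    have hmeas : Measurable (fun ω => (if R i ω = a then (1:ℝ) else 0)
        * (if C j ω = b then (1:ℝ) else 0)
        * (if R k ω = a then (1:ℝ) else 0) * (if C l ω = b then (1:ℝ) else 0)) :=
      (((Measurable.ite (hmR i (measurableSet_singleton a)) measurable_const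
          measurable_const).mul
        (Measurable.ite (hmC j (measurableSet_singleton b)) measurable_const
          measurable_const)).mul
        (Measurable.ite (hmR k (measurableSet_singleton a)) measurable_const
          measurable_const)).mul
        (Measurable.ite (hmC l (measurableSet_singleton b)) measurable_const measurable_const)
    refine Integrable.mono' (integrable_const (1:ℝ)) hmeas.aestronglyMeasurable
      (Filter.Eventually.of_forall fun ω => ?_)
    simp only [Real.norm_eq_abs]
    split_ifs <;> norm_num
  have hab : ∀ (a : Fin Lr) (b : Fin Lj), ∫ ω,
      (∑ i, 2 * ((if C i ω = b then (1 : ℝ) else 0)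
            - (∑ j, if C j ω = b then (1 : ℝ) else 0) / n)
          * ((∑ j, if R j ω = a then (1 : ℝ) else 0) / n
            - (if R i ω = a then (1 : ℝ) else 0))) ^ 2 ∂μ
      = 4 * ((n:ℝ) - 1) * ((pa a - pa a * pa a) * (qb b - qb b * qb b)) := by
    intro a b
    exact integral_ab μ hn (fun s ω => if R s ω = a then (1:ℝ) else 0)
      (fun s ω => if C s ω = b then (1:ℝ) else 0) (pa a) (qb b)
      (fun i j k l => moment_four μ R C pa qb hmR hmC hpa hqb hiid hRC a b i j k l)
      (fun i j k l => hint a b i j k l)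
  rw [Finset.sum_congr rfl (fun a _ => Finset.sum_congr rfl (fun b _ => hab a b))]
  have hP : ∑ a : Fin Lr, pa a * (1 - pa a) = ∑ a : Fin Lr, (pa a - pa a * pa a) :=
    Finset.sum_congr rfl fun a _ => by ring
  have hQ : ∑ b : Fin Lj, qb b * (1 - qb b) = ∑ b : Fin Lj, (qb b - qb b * qb b) :=
    Finset.sum_congr rfl fun b _ => by ring
  rw [hP, hQ]
  simp only [← Finset.mul_sum, ← Finset.sum_mul]
  ring
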